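/- Let ρ : B → A be a ring homomorphism and α, β ring endomorphisms of B such that ρ∘α ≤ ρ and ρ∘β ≤ ρ. Let R = Hom(ρ,ρ) be the intertwiner endomorphism ring (a subring of A) and set F(α) = Hom(ρ, ρ∘α) ⊆ A, an (R,R)-bimodule via multiplication in A, and similarly F(β) and F(α∘β). Then: (i) F(α) is finitely generated projective as a right R-module; (ii) the map F(α) ⊗_R F(β) → F(α∘β) induced by multiplication in A, x ⊗ y ↦ x·y, is bijective, with inverse z ↦ Σ_i q_i ⊗ (p_i·z), where p_i ∈ Hom(ρ∘α, ρ), q_i ∈ Hom(ρ, ρ∘α) is any direct summand diagram witnessing ρ∘α ≤ ρ. -/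
import Mathlib


open MulOpposite TensorProduct

/-- `t` is an intertwiner from the ring homomorphism `α` to the ring homomorphism `β`. -/
def IsIntertwiner {A B : Type*} [Ring A] [Ring B] (α β : A →+* B) (t : B) : Prop :=
  ∀ a : A, t * α a = β a * t

/-- `ρ ≤ σ` for parallel ring homomorphisms: there is a direct summand diagram. -/
def RingHomLE {A B : Type*} [Ring A] [Ring B] (ρ σ : A →+* B) : Prop :=
  ∃ (n : ℕ) (b a : Fin n → B),
    (∀ i, IsIntertwiner ρ σ (b i)) ∧ (∀ i, IsIntertwiner σ ρ (a i)) ∧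
    (∑ i, a i * b i) = 1

variable {A B : Type*} [Ring A] [Ring B]

/-- The additive group `Hom(α,β)` of intertwiners, as an additive subgroup of `B`. -/
def IntwGrp (α β : A →+* B) : AddSubgroup B where
  carrier := {t | IsIntertwiner α β t}
  add_mem' := by
    intro x y hx hy a
    simp only [add_mul, mul_add, hx a, hy a]
  zero_mem' := by intro a; simp
  neg_mem' := by
    intro x hx a
    simp only [neg_mul, mul_neg, hx a]

/-- The intertwiner endomorphism ring `R = Hom(ρ,ρ)` as a subring. -/
def EndSubring (ρ : A →+* B) : Subring B where
  carrier := {t | IsIntertwiner ρ ρ t}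
  mul_mem' := by
    intro x y hx hy a
    rw [mul_assoc, hy a, ← mul_assoc, hx a, mul_assoc]
  one_mem' := by intro a; rw [one_mul, mul_one]
  add_mem' := by
    intro x y hx hy a
    simp only [add_mul, mul_add, hx a, hy a]
  zero_mem' := by intro a; simp
  neg_mem' := by
    intro x hx a
    simp only [neg_mul, mul_neg, hx a]

/-- `Hom(σ,ρ)` is a right module over `Hom(σ,σ)` by multiplication. -/
instance (σ ρ : A →+* B) : SMul (EndSubring σ)ᵐᵒᵖ (IntwGrp σ ρ) :=
  ⟨fun s v => ⟨(v : B) * (s.unop : B), by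
    intro a
    rw [mul_assoc, (s.unop).2 a, ← mul_assoc, v.2 a, mul_assoc]⟩⟩

theorem opSmul_def (σ ρ : A →+* B) (s : (EndSubring σ)ᵐᵒᵖ) (v : IntwGrp σ ρ) :
    ((s • v : IntwGrp σ ρ) : B) = (v : B) * (s.unop : B) := rfl

instance (σ ρ : A →+* B) : Module (EndSubring σ)ᵐᵒᵖ (IntwGrp σ ρ) where
  one_smul v := by apply Subtype.ext; simp [opSmul_def]
  mul_smul s t v := by apply Subtype.ext; simp [opSmul_def, mul_assoc]
  smul_zero s := by apply Subtype.ext; simp [opSmul_def]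
  smul_add s v w := by apply Subtype.ext; simp [opSmul_def, add_mul]
  add_smul s t v := by apply Subtype.ext; simp [opSmul_def, mul_add]
  zero_smul v := by apply Subtype.ext; simp [opSmul_def]

/-- For `ρ : B → A` and an endomorphism `σ` of `B`, the group
`F(σ) = Hom(ρ, ρ∘σ)` is a left module over `R = Hom(ρ,ρ)` by multiplication,
since `R` commutes with the image of `ρ`. -/
instance (ρ : B →+* A) (σ : B →+* B) : SMul (EndSubring ρ) (IntwGrp ρ (ρ.comp σ)) :=
  ⟨fun r x => ⟨(r : A) * (x : A), by
    intro b
    rw [mul_assoc, x.2 b, ← mul_assoc]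
    have h := r.2 (σ b)
    simp only [RingHom.comp_apply]
    rw [show (r : A) * ρ (σ b) = ρ (σ b) * (r : A) from h, mul_assoc]⟩⟩

theorem lSmul_def (ρ : B →+* A) (σ : B →+* B) (r : EndSubring ρ)
    (x : IntwGrp ρ (ρ.comp σ)) :
    ((r • x : IntwGrp ρ (ρ.comp σ)) : A) = (r : A) * (x : A) := rfl

instance (ρ : B →+* A) (σ : B →+* B) : Module (EndSubring ρ) (IntwGrp ρ (ρ.comp σ)) where
  one_smul x := by apply Subtype.ext; simp [lSmul_def]
  mul_smul r s x := by apply Subtype.ext; simp [lSmul_def, mul_assoc]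
  smul_zero r := by apply Subtype.ext; simp [lSmul_def]
  smul_add r x y := by apply Subtype.ext; simp [lSmul_def, mul_add]
  add_smul r s x := by apply Subtype.ext; simp [lSmul_def, add_mul]
  zero_smul x := by apply Subtype.ext; simp [lSmul_def]

/-- The subgroup of `F(α) ⊗_ℤ F(β)` generated by the `R`-balancing relations,
whose quotient realizes `F(α) ⊗_R F(β)`. -/
noncomputable def balancedRelF (ρ : B →+* A) (α β : B →+* B) :
    AddSubgroup ((IntwGrp ρ (ρ.comp α)) ⊗[ℤ] (IntwGrp ρ (ρ.comp β))) :=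
  AddSubgroup.closure
    {z | ∃ (x : IntwGrp ρ (ρ.comp α)) (r : EndSubring ρ) (y : IntwGrp ρ (ρ.comp β)),
      z = (op r • x) ⊗ₜ[ℤ] y - x ⊗ₜ[ℤ] (r • y)}

/-- For `p ∈ Hom(ρ∘α, ρ)` and `z ∈ F(α∘β)`, the product `p·z` lies in `F(β)`. -/
def pMulElem (ρ : B →+* A) (α β : B →+* B) (p : A)
    (hp : IsIntertwiner (ρ.comp α) ρ p) (z : IntwGrp ρ (ρ.comp (α.comp β))) :
    IntwGrp ρ (ρ.comp β) :=
  ⟨p * (z : A), by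
    intro b
    rw [mul_assoc, z.2 b, ← mul_assoc]
    have h := hp (β b)
    simp only [RingHom.comp_apply] at h ⊢
    rw [h, mul_assoc]⟩

/-- Multiplication `F(α) × F(β) → F(α∘β)`. -/
def mulElem (ρ : B →+* A) (α β : B →+* B) (x : IntwGrp ρ (ρ.comp α))
    (y : IntwGrp ρ (ρ.comp β)) : IntwGrp ρ (ρ.comp (α.comp β)) :=
  ⟨(x : A) * (y : A), by
    intro b
    have hy := y.2 b
    have hx := x.2 (β b)
    simp only [RingHom.comp_apply] at hx hy ⊢
    rw [mul_assoc, hy, ← mul_assoc, hx, mul_assoc]⟩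

/-- The multiplication map on the ℤ-tensor product. -/
noncomputable def muMap (ρ : B →+* A) (α β : B →+* B) :
    ((IntwGrp ρ (ρ.comp α)) ⊗[ℤ] (IntwGrp ρ (ρ.comp β))) →+
      IntwGrp ρ (ρ.comp (α.comp β)) :=
  (TensorProduct.lift (LinearMap.mk₂ ℤ (mulElem ρ α β)
    (fun x x' y => by apply Subtype.ext; simp [mulElem, add_mul])
    (fun c x y => by apply Subtype.ext; simp [mulElem, mul_assoc, Int.cast_comm])
    (fun x y y' => by apply Subtype.ext; simp [mulElem, mul_add])
    (fun c x y => by apply Subtype.ext; simp [mulElem, mul_assoc, Int.cast_comm]))).toAddMonoidHom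

theorem muMap_tmul (ρ : B →+* A) (α β : B →+* B) (x : IntwGrp ρ (ρ.comp α))
    (y : IntwGrp ρ (ρ.comp β)) :
    muMap ρ α β (x ⊗ₜ[ℤ] y) = mulElem ρ α β x y := rfl

/-- Let `ρ : B → A` and `α, β` be endomorphisms of `B` with `ρ∘α ≤ ρ` and `ρ∘β ≤ ρ`.
Then (i) `F(α) = Hom(ρ, ρ∘α)` is finitely generated projective as a right module over
`R = Hom(ρ,ρ)`; (ii) the map `F(α) ⊗_R F(β) → F(α∘β)` induced by multiplication in
`A` is bijective, with inverse `z ↦ Σ_i q_i ⊗ (p_i·z)` for any direct summand diagram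
`p_i ∈ Hom(ρ∘α, ρ)`, `q_i ∈ Hom(ρ, ρ∘α)` witnessing `ρ∘α ≤ ρ`. -/
theorem stmt_16 (ρ : B →+* A) (α β : B →+* B)
    (hα : RingHomLE (ρ.comp α) ρ) (hβ : RingHomLE (ρ.comp β) ρ) :
    (Module.Finite (EndSubring ρ)ᵐᵒᵖ (IntwGrp ρ (ρ.comp α)) ∧
      Module.Projective (EndSubring ρ)ᵐᵒᵖ (IntwGrp ρ (ρ.comp α))) ∧
    ∃ φ : ((IntwGrp ρ (ρ.comp α)) ⊗[ℤ] (IntwGrp ρ (ρ.comp β))) ⧸ balancedRelF ρ α β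
        →+ IntwGrp ρ (ρ.comp (α.comp β)),
      (∀ (x : IntwGrp ρ (ρ.comp α)) (y : IntwGrp ρ (ρ.comp β)),
        ((φ (QuotientAddGroup.mk (x ⊗ₜ[ℤ] y)) : A) = (x : A) * (y : A))) ∧
      Function.Bijective φ ∧
      (∀ (n : ℕ) (p q : Fin n → A)
        (hp : ∀ i, IsIntertwiner (ρ.comp α) ρ (p i))
        (hq : ∀ i, IsIntertwiner ρ (ρ.comp α) (q i)),
        (∑ i, q i * p i) = 1 →
        ∀ z : IntwGrp ρ (ρ.comp (α.comp β)),
          φ (∑ i, QuotientAddGroup.mk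
              ((⟨q i, hq i⟩ : IntwGrp ρ (ρ.comp α)) ⊗ₜ[ℤ]
                pMulElem ρ α β (p i) (hp i) z)) = z) := by
  classical
  obtain ⟨n, p, q, hp, hq, hsum⟩ := hα
  -- `qv i` is `q i` as an element of `F(α)`
  set qv : Fin n → IntwGrp ρ (ρ.comp α) := fun i => ⟨q i, hq i⟩ with hqv
  -- `p i * x ∈ R` for `x ∈ F(α)`
  have hpRmem : ∀ (i : Fin n) (x : IntwGrp ρ (ρ.comp α)),
      IsIntertwiner ρ ρ (p i * (x : A)) := by
    intro i x c
    rw [mul_assoc, x.2 c, ← mul_assoc, hp i c, mul_assoc]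
  set pR : Fin n → (IntwGrp ρ (ρ.comp α)) → EndSubring ρ :=
    fun i x => ⟨p i * (x : A), hpRmem i x⟩ with hpR
  -- the key reconstruction identity in `F(α)`
  have key : ∀ x : IntwGrp ρ (ρ.comp α),
      (∑ i, (op (pR i x)) • qv i) = x := by
    intro x
    apply Subtype.ext
    push_cast [opSmul_def]
    calc (∑ i, q i * (p i * (x : A))) = (∑ i, q i * p i) * (x : A) := by
          rw [Finset.sum_mul]; exact Finset.sum_congr rfl fun i _ => (mul_assoc _ _ _).symm
      _ = (x : A) := by rw [hsum, one_mul]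
  -- the section and retraction for (i)
  set sMap : IntwGrp ρ (ρ.comp α) →ₗ[(EndSubring ρ)ᵐᵒᵖ] (Fin n → (EndSubring ρ)ᵐᵒᵖ) :=
    { toFun := fun x i => op (pR i x)
      map_add' := fun x y => by
        funext i
        simp only [Pi.add_apply, ← op_add]
        congr 1
        apply Subtype.ext
        simp [hpR, mul_add]
      map_smul' := fun r x => by
        funext i
        apply MulOpposite.unop_injective
        rw [RingHom.id_apply, Pi.smul_apply, smul_eq_mul, MulOpposite.unop_mul,
          MulOpposite.unop_op]
        apply Subtype.ext
        show p i * ((x : A) * ((r.unop : EndSubring ρ) : A))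
          = (p i * (x : A)) * ((r.unop : EndSubring ρ) : A)
        exact (mul_assoc _ _ _).symm } with hsMap
  set piMap : (Fin n → (EndSubring ρ)ᵐᵒᵖ) →ₗ[(EndSubring ρ)ᵐᵒᵖ] IntwGrp ρ (ρ.comp α) :=
    { toFun := fun c => ∑ i, c i • qv i
      map_add' := fun c d => by
        simp only [Pi.add_apply, add_smul]
        rw [Finset.sum_add_distrib]
      map_smul' := fun r c => by
        simp only [Pi.smul_apply, RingHom.id_apply, smul_eq_mul, mul_smul, Finset.smul_sum] }
    with hpiMap
  have hsection : ∀ x, piMap (sMap x) = x := fun x => key x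
  constructor
  · constructor
    · exact Module.Finite.of_surjective piMap fun x => ⟨sMap x, hsection x⟩
    · exact Module.Projective.of_split sMap piMap (LinearMap.ext hsection)
  -- part (ii)
  have hker : ∀ t ∈ balancedRelF ρ α β, muMap ρ α β t = 0 := by
    intro t ht
    have hle : balancedRelF ρ α β ≤ (muMap ρ α β).ker := by
      refine (AddSubgroup.closure_le _).mpr ?_
      rintro z ⟨x, r, y, rfl⟩
      simp only [SetLike.mem_coe, AddMonoidHom.mem_ker, map_sub, muMap_tmul]
      apply Subtype.ext
      push_cast [mulElem, opSmul_def, lSmul_def]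
      simp [mul_assoc]
    exact AddMonoidHom.mem_ker.mp (hle ht)
  refine ⟨QuotientAddGroup.lift (balancedRelF ρ α β) (muMap ρ α β) hker, ?_, ?_, ?_⟩
  · intro x y; rfl
  · -- bijectivity
    set φ := QuotientAddGroup.lift (balancedRelF ρ α β) (muMap ρ α β) hker with hφ
    -- retraction Ψ of φ
    set Ψ : IntwGrp ρ (ρ.comp (α.comp β)) →
        ((IntwGrp ρ (ρ.comp α)) ⊗[ℤ] (IntwGrp ρ (ρ.comp β))) ⧸ balancedRelF ρ α β :=
      fun z => ∑ i, QuotientAddGroup.mk (qv i ⊗ₜ[ℤ] pMulElem ρ α β (p i) (hp i) z)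
      with hΨ
    have hΨapp : ∀ z, Ψ z =
        ∑ i, (QuotientAddGroup.mk (qv i ⊗ₜ[ℤ] pMulElem ρ α β (p i) (hp i) z) :
          ((IntwGrp ρ (ρ.comp α)) ⊗[ℤ] (IntwGrp ρ (ρ.comp β))) ⧸ balancedRelF ρ α β) :=
      fun _ => rfl
    have hΨadd : ∀ z z', Ψ (z + z') = Ψ z + Ψ z' := by
      intro z z'
      rw [hΨapp z, hΨapp z', hΨapp (z + z'), ← Finset.sum_add_distrib]
      refine Finset.sum_congr rfl fun i _ => ?_
      have hadd : pMulElem ρ α β (p i) (hp i) (z + z')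
          = pMulElem ρ α β (p i) (hp i) z + pMulElem ρ α β (p i) (hp i) z' := by
        apply Subtype.ext
        push_cast [pMulElem]
        rw [mul_add]
      rw [hadd, TensorProduct.tmul_add, QuotientAddGroup.mk_add]
    have hΨμ : ∀ t, Ψ (muMap ρ α β t) = QuotientAddGroup.mk t := by
      intro t
      induction t using TensorProduct.induction_on with
      | zero =>
        have h0 : ∀ i : Fin n, qv i ⊗ₜ[ℤ]
            pMulElem ρ α β (p i) (hp i) (0 : IntwGrp ρ (ρ.comp (α.comp β))) = 0 := by
          intro i
          have h1 : pMulElem ρ α β (p i) (hp i) (0 : IntwGrp ρ (ρ.comp (α.comp β))) = 0 := by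
            apply Subtype.ext; simp [pMulElem]
          rw [h1, TensorProduct.tmul_zero]
        rw [map_zero, hΨapp]
        simp [h0]
      | tmul x y =>
        rw [muMap_tmul, hΨapp]
        have hterm : ∀ i : Fin n,
            (QuotientAddGroup.mk (qv i ⊗ₜ[ℤ]
              pMulElem ρ α β (p i) (hp i) (mulElem ρ α β x y)) :
              ((IntwGrp ρ (ρ.comp α)) ⊗[ℤ] (IntwGrp ρ (ρ.comp β))) ⧸ balancedRelF ρ α β)
            = QuotientAddGroup.mk (((op (pR i x)) • qv i) ⊗ₜ[ℤ] y) := by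
          intro i
          have h1 : pMulElem ρ α β (p i) (hp i) (mulElem ρ α β x y) = (pR i x) • y := by
            apply Subtype.ext
            push_cast [pMulElem, mulElem, lSmul_def, hpR]
            rw [mul_assoc]
          rw [h1]
          rw [QuotientAddGroup.eq]
          apply AddSubgroup.subset_closure
          refine ⟨qv i, pR i x, y, ?_⟩
          abel
        have hsum' : (QuotientAddGroup.mk ((∑ i, (op (pR i x)) • qv i) ⊗ₜ[ℤ] y) :
            ((IntwGrp ρ (ρ.comp α)) ⊗[ℤ] (IntwGrp ρ (ρ.comp β))) ⧸ balancedRelF ρ α β)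
            = ∑ i, QuotientAddGroup.mk (((op (pR i x)) • qv i) ⊗ₜ[ℤ] y) := by
          rw [TensorProduct.sum_tmul, ← QuotientAddGroup.mk'_apply, map_sum]
          simp [QuotientAddGroup.mk'_apply]
        rw [Finset.sum_congr rfl fun i _ => hterm i, ← hsum', key x]
      | add s t hs ht =>
        rw [map_add, hΨadd, hs, ht, QuotientAddGroup.mk_add]
    have hΨφ : ∀ u, Ψ (φ u) = u := by
      intro u
      obtain ⟨t, rfl⟩ := QuotientAddGroup.mk'_surjective (balancedRelF ρ α β) u
      exact hΨμ t
    constructor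
    · intro u v h
      rw [← hΨφ u, ← hΨφ v, h]
    · intro z
      refine ⟨Ψ z, ?_⟩
      rw [hΨapp, map_sum]
      apply Subtype.ext
      have hφterm : ∀ i : Fin n,
          ((φ (QuotientAddGroup.mk (qv i ⊗ₜ[ℤ] pMulElem ρ α β (p i) (hp i) z)) : A))
          = q i * (p i * (z : A)) := fun i => rfl
      push_cast []
      rw [Finset.sum_congr rfl fun i _ => hφterm i]
      calc (∑ i, q i * (p i * (z : A))) = (∑ i, q i * p i) * (z : A) := by
            rw [Finset.sum_mul]; exact Finset.sum_congr rfl fun i _ => (mul_assoc _ _ _).symm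
        _ = (z : A) := by rw [hsum, one_mul]
  · -- the explicit inverse formula for any direct summand diagram
    intro m P Q hP hQ hS z
    rw [map_sum]
    apply Subtype.ext
    have hφterm : ∀ i : Fin m,
        ((QuotientAddGroup.lift (balancedRelF ρ α β) (muMap ρ α β) hker
          (QuotientAddGroup.mk ((⟨Q i, hQ i⟩ : IntwGrp ρ (ρ.comp α)) ⊗ₜ[ℤ]
            pMulElem ρ α β (P i) (hP i) z)) : A))
        = Q i * (P i * (z : A)) := fun i => rfl
    push_cast []
    rw [Finset.sum_congr rfl fun i _ => hφterm i]
    calc (∑ i, Q i * (P i * (z : A))) = (∑ i, Q i * P i) * (z : A) := by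
          rw [Finset.sum_mul]; exact Finset.sum_congr rfl fun i _ => (mul_assoc _ _ _).symm
      _ = (z : A) := by rw [hS, one_mul]
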